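/- Let G be a 2-connected K_{1,4}-free split graph with maximum clique K, |K| ≥ |I| ≥ 8, Δ^I = 3, no short cycles, and let 𝕮 be the collection of maximal alternating paths in G − N^I(v). If 𝕮 contains no path on 7 or more vertices, then it contains at most two paths on 5 vertices. -/

import Mathlib

open SimpleGraph

variable {V : Type*}

/-- `I` is an independent set in `G`. -/
def IndepOn (G : SimpleGraph V) (I : Set V) : Prop :=
  ∀ ⦃u⦄, u ∈ I → ∀ ⦃v⦄, v ∈ I → ¬ G.Adj u v

/-- `(K, I)` is a split partition of `G`: `K` a clique, `I` independent,
partitioning the vertex set. -/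
def SplitPartition (G : SimpleGraph V) (K I : Set V) : Prop :=
  Disjoint K I ∧ K ∪ I = Set.univ ∧ G.IsClique K ∧ IndepOn G I

/-- `K` is a maximum clique of `G`. -/
def MaxClique (G : SimpleGraph V) (K : Set V) : Prop :=
  G.IsClique K ∧ ∀ K' : Set V, G.IsClique K' → K'.ncard ≤ K.ncard

/-- `G` has no induced copy of the star `K_{1,n}` (center plus `n` pairwise
nonadjacent leaves). -/
def StarFree (G : SimpleGraph V) (n : ℕ) : Prop :=
  ¬ ∃ (c : V) (L : Finset V), L.card = n ∧ c ∉ L ∧ (∀ l ∈ L, G.Adj c l) ∧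
      (∀ l ∈ L, ∀ m ∈ L, l ≠ m → ¬ G.Adj l m)

/-- `G` is 2-connected: at least 3 vertices and deleting any single vertex
leaves a connected graph. -/
def TwoConnected (G : SimpleGraph V) [Fintype V] : Prop :=
  3 ≤ Fintype.card V ∧ ∀ v : V, (G.induce (({v} : Set V)ᶜ)).Connected

/-- The bipartite subgraph `H` of `G` on `V_a = {u ∈ I : deg u = 2}` and
`V_b = N(V_a)`: its edges are exactly the edges of `G` incident to a degree-2
vertex of `I`. -/
def shortSub (G : SimpleGraph V) (I : Set V) : SimpleGraph V where
  Adj x y := G.Adj x y ∧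
    ((x ∈ I ∧ (G.neighborSet x).ncard = 2) ∨ (y ∈ I ∧ (G.neighborSet y).ncard = 2))
  symm := ⟨fun x y h => ⟨h.1.symm, h.2.symm⟩⟩
  loopless := ⟨fun x h => G.loopless.irrefl x h.1⟩

/-- `G` has a short cycle: an induced cycle in the bipartite subgraph
`shortSub G I` missing at least one vertex of `K`. -/
def HasShortCycle (G : SimpleGraph V) (K I : Set V) : Prop :=
  ∃ (n : ℕ) (f : cycleGraph n ↪g shortSub G I), 3 ≤ n ∧ ∃ k ∈ K, k ∉ Set.range ⇑f

/-- `(w, x)` describes an alternating path `w 0, x 0, w 1, x 1, …, w (j-1)`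
in `G - A` with the `j` vertices `w i` in `K` and the `j - 1` vertices `x i`
in `I`, all distinct and avoiding `A`. -/
def IsAltPath (G : SimpleGraph V) (K I A : Set V) (j : ℕ) (w x : ℕ → V) : Prop :=
  2 ≤ j ∧
  (∀ i < j, w i ∈ K ∧ w i ∉ A) ∧
  (∀ i < j - 1, x i ∈ I ∧ x i ∉ A) ∧
  (∀ i < j, ∀ k < j, w i = w k → i = k) ∧
  (∀ i < j - 1, ∀ k < j - 1, x i = x k → i = k) ∧
  (∀ i < j, ∀ k < j - 1, w i ≠ x k) ∧
  (∀ i < j - 1, G.Adj (w i) (x i) ∧ G.Adj (w (i + 1)) (x i))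

/-- The vertex set of the alternating path `(w, x)` with `j` clique vertices. -/
def altPathVerts (j : ℕ) (w x : ℕ → V) : Set V :=
  {u | ∃ i < j, u = w i} ∪ {u | ∃ i < j - 1, u = x i}


lemma star4_aux {G : SimpleGraph V} (hfree : StarFree G 4) {c p q r u : V}
    (hpq : p ≠ q) (hpr : p ≠ r) (hqr : q ≠ r)
    (hup : u ≠ p) (huq : u ≠ q) (hur : u ≠ r)
    (hcp : G.Adj c p) (hcq : G.Adj c q) (hcr : G.Adj c r) (hcu : G.Adj c u)
    (npq : ¬ G.Adj p q) (npr : ¬ G.Adj p r) (nqr : ¬ G.Adj q r)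
    (nup : ¬ G.Adj u p) (nuq : ¬ G.Adj u q) (nur : ¬ G.Adj u r) : False := by
  classical
  apply hfree
  refine ⟨c, {p, q, r, u}, ?_, ?_, ?_, ?_⟩
  · rw [Finset.card_insert_of_notMem (by simp [hpq, hpr, Ne.symm hup]),
      Finset.card_insert_of_notMem (by simp [hqr, Ne.symm huq]),
      Finset.card_insert_of_notMem (by simp [Ne.symm hur]), Finset.card_singleton]
  · intro hc
    simp only [Finset.mem_insert, Finset.mem_singleton] at hc
    rcases hc with rfl | rfl | rfl | rfl
    · exact G.loopless.irrefl _ hcp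
    · exact G.loopless.irrefl _ hcq
    · exact G.loopless.irrefl _ hcr
    · exact G.loopless.irrefl _ hcu
  · intro l hl
    simp only [Finset.mem_insert, Finset.mem_singleton] at hl
    rcases hl with rfl | rfl | rfl | rfl <;> assumption
  · intro l hl m hm hlm
    simp only [Finset.mem_insert, Finset.mem_singleton] at hl hm
    rcases hl with rfl | rfl | rfl | rfl <;> rcases hm with rfl | rfl | rfl | rfl <;>
      first
        | exact absurd rfl hlm
        | assumption
        | exact fun h => npq h.symm
        | exact fun h => npr h.symm
        | exact fun h => nqr h.symm
        | exact fun h => nup h.symm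
        | exact fun h => nuq h.symm
        | exact fun h => nur h.symm

/-- If the collection of alternating paths contains no path on 7 or more
vertices (`j ≥ 4`), then it contains at most two paths on 5 vertices
(`j = 3`): no three pairwise disjoint 5-vertex paths exist. -/
theorem at_most_two_five_vertex_paths [Fintype V] (G : SimpleGraph V)
    (K I : Set V) (hsplit : SplitPartition G K I) (hmax : MaxClique G K)
    (h2 : TwoConnected G) (hfree : StarFree G 4)
    (hI : 8 ≤ I.ncard) (hKI : I.ncard ≤ K.ncard)
    (hub : ∀ u ∈ K, (G.neighborSet u ∩ I).ncard ≤ 3)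
    (v : V) (hv : v ∈ K) (hdeg : (G.neighborSet v ∩ I).ncard = 3)
    (hshort : ¬ HasShortCycle G K I) :
    (¬ ∃ j, 4 ≤ j ∧ ∃ w x : ℕ → V,
        IsAltPath G K I (G.neighborSet v ∩ I) j w x) →
    ¬ ∃ (w₁ x₁ w₂ x₂ w₃ x₃ : ℕ → V),
        IsAltPath G K I (G.neighborSet v ∩ I) 3 w₁ x₁ ∧
        IsAltPath G K I (G.neighborSet v ∩ I) 3 w₂ x₂ ∧
        IsAltPath G K I (G.neighborSet v ∩ I) 3 w₃ x₃ ∧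
        Disjoint (altPathVerts 3 w₁ x₁) (altPathVerts 3 w₂ x₂) ∧
        Disjoint (altPathVerts 3 w₁ x₁) (altPathVerts 3 w₃ x₃) ∧
        Disjoint (altPathVerts 3 w₂ x₂) (altPathVerts 3 w₃ x₃) := by
  intro _
  rintro ⟨w₁, x₁, w₂, x₂, w₃, x₃, hP1, hP2, hP3, hd12, hd13, hd23⟩
  obtain ⟨hdisj, -, hclK, hindep⟩ := hsplit
  obtain ⟨-, hmaxle⟩ := hmax
  have hKnotI : ∀ {u : V}, u ∈ K → u ∉ I := fun hu => Set.disjoint_left.mp hdisj hu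
  -- Step 1: every clique vertex other than `v` has a neighbor in `A = N(v) ∩ I`.
  have step1 : ∀ u ∈ K, u ≠ v → ∃ a ∈ G.neighborSet v ∩ I, G.Adj u a := by
    intro u hu hune
    by_contra hcon
    push_neg at hcon
    obtain ⟨b₁, b₂, b₃, h12, h13, h23, hAeq⟩ := Set.ncard_eq_three.mp hdeg
    have hb : ∀ b ∈ ({b₁, b₂, b₃} : Set V), G.Adj v b ∧ b ∈ I := by
      intro b hbm
      have hbm' : b ∈ G.neighborSet v ∩ I := hAeq ▸ hbm
      exact ⟨hbm'.1, hbm'.2⟩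
    have hb₁ := hb b₁ (by simp)
    have hb₂ := hb b₂ (by simp)
    have hb₃ := hb b₃ (by simp)
    have hcon' : ∀ b ∈ ({b₁, b₂, b₃} : Set V), ¬ G.Adj u b := fun b hbm =>
      hcon b (hAeq ▸ hbm)
    exact star4_aux hfree h12 h13 h23
      (fun h => hKnotI hu (by rw [h]; exact hb₁.2)) (fun h => hKnotI hu (by rw [h]; exact hb₂.2))
      (fun h => hKnotI hu (by rw [h]; exact hb₃.2))
      hb₁.1 hb₂.1 hb₃.1 (hclK hv hu (Ne.symm hune))
      (hindep hb₁.2 hb₂.2) (hindep hb₁.2 hb₃.2) (hindep hb₂.2 hb₃.2)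
      (hcon' b₁ (by simp)) (hcon' b₂ (by simp)) (hcon' b₃ (by simp))
  -- Step 2: analysis of a 5-vertex path.
  have key : ∀ w x : ℕ → V, IsAltPath G K I (G.neighborSet v ∩ I) 3 w x →
      ∃ a, (a ∈ G.neighborSet v ∩ I) ∧ G.neighborSet (w 1) ∩ I = {x 0, x 1, a} ∧
        ∀ u ∈ K, G.Adj u (x 0) ∨ G.Adj u (x 1) ∨ G.Adj u a := by
    intro w x hP
    obtain ⟨-, hw, hx, -, hxinj, -, hadj⟩ := hP
    have hw1K : w 1 ∈ K := (hw 1 (by norm_num)).1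
    have hx0 := hx 0 (by norm_num)
    have hx1 := hx 1 (by norm_num)
    have had0 := hadj 0 (by norm_num)
    have had1 := hadj 1 (by norm_num)
    have hw1v : w 1 ≠ v := by
      intro h
      exact hx0.2 ⟨h ▸ had0.2, hx0.1⟩
    obtain ⟨a, haA, hadjA⟩ := step1 (w 1) hw1K hw1v
    have hxne : x 0 ≠ x 1 := fun h => by
      simpa using hxinj 0 (by norm_num) 1 (by norm_num) h
    have hx0a : x 0 ≠ a := fun h => hx0.2 (h ▸ haA)
    have hx1a : x 1 ≠ a := fun h => hx1.2 (h ▸ haA)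
    have hNsub : ({x 0, x 1, a} : Set V) ⊆ G.neighborSet (w 1) ∩ I := by
      intro z hz
      simp only [Set.mem_insert_iff, Set.mem_singleton_iff] at hz
      rcases hz with rfl | rfl | rfl
      · exact ⟨had0.2, hx0.1⟩
      · exact ⟨had1.1, hx1.1⟩
      · exact ⟨hadjA, haA.2⟩
    have hNeq : G.neighborSet (w 1) ∩ I = {x 0, x 1, a} := by
      refine (Set.eq_of_subset_of_ncard_le hNsub ?_ (Set.toFinite _)).symm
      calc (G.neighborSet (w 1) ∩ I).ncard ≤ 3 := hub _ hw1K
        _ = ({x 0, x 1, a} : Set V).ncard :=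
            (Set.ncard_eq_three.mpr ⟨_, _, _, hxne, hx0a, hx1a, rfl⟩).symm
    refine ⟨a, haA, hNeq, ?_⟩
    intro u hu
    by_cases hu1 : u = w 1
    · exact Or.inl (hu1 ▸ had0.2)
    · by_contra hcon
      push_neg at hcon
      exact star4_aux hfree hxne hx0a hx1a
        (fun h => hKnotI hu (by rw [h]; exact hx0.1)) (fun h => hKnotI hu (by rw [h]; exact hx1.1))
        (fun h => hKnotI hu (by rw [h]; exact haA.2))
        had0.2 had1.1 hadjA (hclK hw1K hu (fun h => hu1 h.symm))
        (hindep hx0.1 hx1.1) (hindep hx0.1 haA.2) (hindep hx1.1 haA.2)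
        hcon.1 hcon.2.1 hcon.2.2
  obtain ⟨a₁, ha₁, hN1, hall1⟩ := key w₁ x₁ hP1
  obtain ⟨a₂, ha₂, hN2, hall2⟩ := key w₂ x₂ hP2
  obtain ⟨a₃, ha₃, hN3, hall3⟩ := key w₃ x₃ hP3
  have facts : ∀ w x : ℕ → V, IsAltPath G K I (G.neighborSet v ∩ I) 3 w x →
      (w 1 ∈ K) ∧ (∀ i < 2, x i ∈ I ∧ x i ∉ G.neighborSet v ∩ I) :=
    fun w x hP => ⟨(hP.2.1 1 (by norm_num)).1, fun i hi => hP.2.2.1 i hi⟩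
  obtain ⟨hw1K₁, hxf₁⟩ := facts w₁ x₁ hP1
  obtain ⟨hw1K₂, hxf₂⟩ := facts w₂ x₂ hP2
  obtain ⟨hw1K₃, hxf₃⟩ := facts w₃ x₃ hP3
  have memx : ∀ (w x : ℕ → V) (i : ℕ), i < 2 → x i ∈ altPathVerts 3 w x :=
    fun w x i hi => Set.mem_union_right _ ⟨i, hi, rfl⟩
  have hne12 : ∀ i < 2, ∀ j < 2, x₁ i ≠ x₂ j := fun i hi j hj h =>
    Set.disjoint_left.mp hd12 (memx w₁ x₁ i hi) (by rw [h]; exact memx w₂ x₂ j hj)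
  have hne13 : ∀ i < 2, ∀ j < 2, x₁ i ≠ x₃ j := fun i hi j hj h =>
    Set.disjoint_left.mp hd13 (memx w₁ x₁ i hi) (by rw [h]; exact memx w₃ x₃ j hj)
  have hne23 : ∀ i < 2, ∀ j < 2, x₂ i ≠ x₃ j := fun i hi j hj h =>
    Set.disjoint_left.mp hd23 (memx w₂ x₂ i hi) (by rw [h]; exact memx w₃ x₃ j hj)
  -- Step 3: the `A`-vertices attached to the middles of the three paths coincide.
  have haeq : ∀ (xa : ℕ → V) (aa : V) (wb xb : ℕ → V) (ab : V),
      (∀ u ∈ K, G.Adj u (xa 0) ∨ G.Adj u (xa 1) ∨ G.Adj u aa) →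
      G.neighborSet (wb 1) ∩ I = {xb 0, xb 1, ab} →
      wb 1 ∈ K → aa ∈ G.neighborSet v ∩ I → ab ∈ G.neighborSet v ∩ I →
      (∀ i < 2, xa i ∈ I ∧ xa i ∉ G.neighborSet v ∩ I) →
      (∀ i < 2, xb i ∈ I ∧ xb i ∉ G.neighborSet v ∩ I) →
      (∀ i < 2, ∀ j < 2, xa i ≠ xb j) → aa = ab := by
    intro xa aa wb xb ab halla hNb hwbK haa hab hxa hxb hne
    have hmem : ∀ y, G.Adj (wb 1) y → y ∈ I → y ∈ ({xb 0, xb 1, ab} : Set V) :=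
      fun y hy hyI => hNb ▸ (⟨hy, hyI⟩ : y ∈ G.neighborSet (wb 1) ∩ I)
    rcases halla (wb 1) hwbK with h | h | h
    · have h' := hmem _ h (hxa 0 (by norm_num)).1
      simp only [Set.mem_insert_iff, Set.mem_singleton_iff] at h'
      rcases h' with h' | h' | h'
      · exact absurd h' (hne 0 (by norm_num) 0 (by norm_num))
      · exact absurd h' (hne 0 (by norm_num) 1 (by norm_num))
      · exact absurd (h' ▸ hab) (hxa 0 (by norm_num)).2
    · have h' := hmem _ h (hxa 1 (by norm_num)).1
      simp only [Set.mem_insert_iff, Set.mem_singleton_iff] at h'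
      rcases h' with h' | h' | h'
      · exact absurd h' (hne 1 (by norm_num) 0 (by norm_num))
      · exact absurd h' (hne 1 (by norm_num) 1 (by norm_num))
      · exact absurd (h' ▸ hab) (hxa 1 (by norm_num)).2
    · have h' := hmem _ h haa.2
      simp only [Set.mem_insert_iff, Set.mem_singleton_iff] at h'
      rcases h' with h' | h' | h'
      · exact absurd (h' ▸ haa) (hxb 0 (by norm_num)).2
      · exact absurd (h' ▸ haa) (hxb 1 (by norm_num)).2
      · exact h'
  have ha12 : a₁ = a₂ := haeq x₁ a₁ w₂ x₂ a₂ hall1 hN2 hw1K₂ ha₁ ha₂ hxf₁ hxf₂ hne12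
  have ha13 : a₁ = a₃ := haeq x₁ a₁ w₃ x₃ a₃ hall1 hN3 hw1K₃ ha₁ ha₃ hxf₁ hxf₃ hne13
  -- Step 4: `a₁` is adjacent to every vertex of `K`.
  have hall : ∀ u ∈ K, G.Adj u a₁ := by
    intro u hu
    by_cases huv : u = v
    · subst huv; exact ha₁.1
    · by_contra hcon
      have pick : ∀ (x : ℕ → V),
          (∀ u' ∈ K, G.Adj u' (x 0) ∨ G.Adj u' (x 1) ∨ G.Adj u' a₁) →
          ∃ i, i < 2 ∧ G.Adj u (x i) := by
        intro x hA'
        rcases hA' u hu with h | h | h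
        · exact ⟨0, by norm_num, h⟩
        · exact ⟨1, by norm_num, h⟩
        · exact absurd h hcon
      obtain ⟨i₁, hi₁, hadj1⟩ := pick x₁ hall1
      obtain ⟨i₂, hi₂, hadj2⟩ := pick x₂ (by rw [ha12]; exact hall2)
      obtain ⟨i₃, hi₃, hadj3⟩ := pick x₃ (by rw [ha13]; exact hall3)
      have hsub : ({x₁ i₁, x₂ i₂, x₃ i₃} : Set V) ⊆ G.neighborSet u ∩ I := by
        intro z hz
        simp only [Set.mem_insert_iff, Set.mem_singleton_iff] at hz
        rcases hz with rfl | rfl | rfl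
        · exact ⟨hadj1, (hxf₁ i₁ hi₁).1⟩
        · exact ⟨hadj2, (hxf₂ i₂ hi₂).1⟩
        · exact ⟨hadj3, (hxf₃ i₃ hi₃).1⟩
      have hcard : ({x₁ i₁, x₂ i₂, x₃ i₃} : Set V).ncard = 3 :=
        Set.ncard_eq_three.mpr ⟨_, _, _, hne12 i₁ hi₁ i₂ hi₂, hne13 i₁ hi₁ i₃ hi₃,
          hne23 i₂ hi₂ i₃ hi₃, rfl⟩
      have hNu : G.neighborSet u ∩ I = {x₁ i₁, x₂ i₂, x₃ i₃} :=
        (Set.eq_of_subset_of_ncard_le hsub (by rw [hcard]; exact hub u hu)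
          (Set.toFinite _)).symm
      obtain ⟨a', ha', hadj'⟩ := step1 u hu huv
      have hmem : a' ∈ ({x₁ i₁, x₂ i₂, x₃ i₃} : Set V) :=
        hNu ▸ (⟨hadj', ha'.2⟩ : a' ∈ G.neighborSet u ∩ I)
      simp only [Set.mem_insert_iff, Set.mem_singleton_iff] at hmem
      rcases hmem with h | h | h
      · exact (hxf₁ i₁ hi₁).2 (h ▸ ha')
      · exact (hxf₂ i₂ hi₂).2 (h ▸ ha')
      · exact (hxf₃ i₃ hi₃).2 (h ▸ ha')
  -- Step 5: `K ∪ {a₁}` is a bigger clique, contradiction.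
  have haK : a₁ ∉ K := fun h => Set.disjoint_left.mp hdisj h ha₁.2
  have hcl : G.IsClique (insert a₁ K) := by
    intro p hp q hq hpq
    rcases Set.mem_insert_iff.mp hp with rfl | hp'
    · rcases Set.mem_insert_iff.mp hq with rfl | hq'
      · exact absurd rfl hpq
      · exact (hall q hq').symm
    · rcases Set.mem_insert_iff.mp hq with rfl | hq'
      · exact hall p hp'
      · exact hclK hp' hq' hpq
  have hle := hmaxle _ hcl
  rw [Set.ncard_insert_of_notMem haK (Set.toFinite K)] at hle
  omega
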